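/- Let G be a graph with positive edge weights w_e, and define the weighted matching polynomial M((G,w); t) = Σ_{S matching} (Π_{e∈S} w_e) (-1)^{|S|} t^{n-2|S|}. If G is a tree and G₁ is a subgraph of G (with the induced edge weights), then the largest real root of M((G₁,w); t) is at most the largest real root of M((G,w); t). -/

import Mathlib

open Finset
open scoped Classical

/-- A matching of a simple graph: a finite set of edges, pairwise vertex-disjoint. -/
def IsMatchingSet {V : Type*} [DecidableEq V] (G : SimpleGraph V) (M : Finset (Sym2 V)) : Prop :=
  (∀ e ∈ M, e ∈ G.edgeSet) ∧
    ∀ e ∈ M, ∀ f ∈ M, e ≠ f → ∀ v, v ∈ e → v ∉ f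

/-- The finite set of all matchings of `G` (including the empty matching). -/
noncomputable def matchings {V : Type*} [Fintype V] [DecidableEq V] (G : SimpleGraph V) :
    Finset (Finset (Sym2 V)) :=
  Finset.univ.filter fun M => IsMatchingSet G M

/-- The weighted matching polynomial
`M((G,w);t) = Σ_{S matching} (Π_{e∈S} w_e) (-1)^{|S|} t^{n-2|S|}`. -/
noncomputable def wmp {V : Type*} [Fintype V] [DecidableEq V] (G : SimpleGraph V)
    (w : Sym2 V → ℝ) (t : ℝ) : ℝ :=
  ∑ M ∈ matchings G, (∏ e ∈ M, w e) * (-1 : ℝ) ^ M.card * t ^ (Fintype.card V - 2 * M.card)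

section Comb
variable {V : Type*} [Fintype V] [DecidableEq V]

/-- Weighted adjacency matrix with entries `√w`. -/
noncomputable def adjM (H : SimpleGraph V) (w : Sym2 V → ℝ) : Matrix V V ℝ :=
  Matrix.of fun i j => if H.Adj i j then Real.sqrt (w s(i, j)) else 0

noncomputable def matchFun (M : Finset (Sym2 V)) (v : V) : V :=
  if h : ∃ e ∈ M, v ∈ e then Sym2.Mem.other h.choose_spec.2 else v

lemma matchFun_eq {H : SimpleGraph V} {M : Finset (Sym2 V)} (hM : IsMatchingSet H M)
    {v : V} {e : Sym2 V} (he : e ∈ M) (hv : v ∈ e) :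
    matchFun M v = Sym2.Mem.other hv := by
  have hex : ∃ e ∈ M, v ∈ e := ⟨e, he, hv⟩
  rw [matchFun, dif_pos hex]
  have h1 := hex.choose_spec.1
  have h2 := hex.choose_spec.2
  have hce : hex.choose = e := by
    by_contra hne
    exact hM.2 _ h1 _ he hne v h2 hv
  subst hce
  rfl

lemma matchFun_eq_self {M : Finset (Sym2 V)} {v : V} (h : ¬∃ e ∈ M, v ∈ e) :
    matchFun M v = v := by
  rw [matchFun, dif_neg h]

lemma matchFun_involutive {H : SimpleGraph V} {M : Finset (Sym2 V)}
    (hM : IsMatchingSet H M) : Function.Involutive (matchFun M) := by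
  intro v
  by_cases hex : ∃ e ∈ M, v ∈ e
  · obtain ⟨e, he, hv⟩ := hex
    rw [matchFun_eq hM he hv]
    have hv2 : Sym2.Mem.other hv ∈ e := Sym2.other_mem hv
    rw [matchFun_eq hM he hv2, Sym2.other_invol]
  · rw [matchFun_eq_self hex, matchFun_eq_self hex]

noncomputable def mperm (M : Finset (Sym2 V)) : Equiv.Perm V :=
  if h : Function.Involutive (matchFun M) then h.toPerm else 1

lemma mperm_apply {H : SimpleGraph V} {M : Finset (Sym2 V)} (hM : IsMatchingSet H M) (v : V) :
    mperm M v = matchFun M v := by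
  rw [mperm, dif_pos (matchFun_involutive hM)]
  rfl

noncomputable def matchOf (σ : Equiv.Perm V) : Finset (Sym2 V) :=
  (Finset.univ.filter fun i => σ i ≠ i).image fun i => s(i, σ i)

lemma mem_matchOf {σ : Equiv.Perm V} {e : Sym2 V} :
    e ∈ matchOf σ ↔ ∃ i, σ i ≠ i ∧ s(i, σ i) = e := by
  simp [matchOf]

/-- F1 -/
lemma matchOf_isMatching {H : SimpleGraph V} {σ : Equiv.Perm V}
    (hgood : ∀ i, σ i ≠ i → H.Adj (σ i) i) (hinv : ∀ v, σ (σ v) = v) :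
    IsMatchingSet H (matchOf σ) := by
  constructor
  · intro e he
    obtain ⟨i, hi, rfl⟩ := mem_matchOf.mp he
    exact (H.mem_edgeSet).mpr ((hgood i hi).symm)
  · intro e he f hf hef v hve hvf
    obtain ⟨i, hi, rfl⟩ := mem_matchOf.mp he
    obtain ⟨j, hj, rfl⟩ := mem_matchOf.mp hf
    rw [Sym2.mem_iff] at hve hvf
    rcases hve with rfl | rfl <;> rcases hvf with h | h
    · exact hef (by rw [h])
    · apply hef; rw [show v = σ j from h] at hi ⊢; rw [hinv j, Sym2.eq_swap]
    · apply hef; rw [← h] at hj ⊢; rw [hinv i, Sym2.eq_swap]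
    · have : i = j := σ.injective h
      exact hef (by rw [this])

/-- F4 -/
lemma mperm_good {H : SimpleGraph V} {M : Finset (Sym2 V)} (hM : IsMatchingSet H M) :
    ∀ i, mperm M i ≠ i → H.Adj (mperm M i) i := by
  intro v hv
  by_cases hex : ∃ e ∈ M, v ∈ e
  · obtain ⟨e, he, hve⟩ := hex
    rw [mperm_apply hM, matchFun_eq hM he hve]
    have hspec := Sym2.other_spec hve
    have hedge := hM.1 e he
    rw [← hspec] at hedge
    exact ((H.mem_edgeSet).mp hedge).symm
  · exact absurd (by rw [mperm_apply hM, matchFun_eq_self hex]) hv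

lemma mperm_involutive {H : SimpleGraph V} {M : Finset (Sym2 V)} (hM : IsMatchingSet H M) :
    ∀ v, mperm M (mperm M v) = v := by
  intro v
  rw [mperm_apply hM, mperm_apply hM]
  exact matchFun_involutive hM v

/-- F2 -/
lemma mperm_matchOf {H : SimpleGraph V} {σ : Equiv.Perm V}
    (hgood : ∀ i, σ i ≠ i → H.Adj (σ i) i) (hinv : ∀ v, σ (σ v) = v) :
    mperm (matchOf σ) = σ := by
  have hM := matchOf_isMatching hgood hinv
  ext v
  rw [mperm_apply hM]
  by_cases hv : σ v = v
  · rw [matchFun_eq_self, hv]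
    rintro ⟨e, he, hve⟩
    obtain ⟨i, hi, rfl⟩ := mem_matchOf.mp he
    rw [Sym2.mem_iff] at hve
    rcases hve with rfl | rfl
    · exact hi hv
    · exact hi (by conv_lhs => rw [← hv]; rw [hinv i])
  · have he : s(v, σ v) ∈ matchOf σ := mem_matchOf.mpr ⟨v, hv, rfl⟩
    have hve : v ∈ s(v, σ v) := Sym2.mem_mk_left _ _
    rw [matchFun_eq hM he hve]
    exact Sym2.congr_right.mp (Sym2.other_spec hve)

/-- F3 -/
lemma matchOf_mperm {H : SimpleGraph V} {M : Finset (Sym2 V)} (hM : IsMatchingSet H M) :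
    matchOf (mperm M) = M := by
  ext e
  constructor
  · intro he
    obtain ⟨i, hi, rfl⟩ := mem_matchOf.mp he
    by_cases hex : ∃ f ∈ M, i ∈ f
    · obtain ⟨f, hf, hif⟩ := hex
      have : mperm M i = Sym2.Mem.other hif := by
        rw [mperm_apply hM, matchFun_eq hM hf hif]
      rw [this, Sym2.other_spec hif]
      exact hf
    · exact absurd (by rw [mperm_apply hM, matchFun_eq_self hex]) hi
  · intro he
    induction e using Sym2.ind with
    | _ a b =>
      have hab : a ≠ b := by
        intro h
        exact SimpleGraph.not_isDiag_of_mem_edgeSet H (hM.1 _ he) (by rw [h]; exact Sym2.mk_isDiag_iff.mpr rfl)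
      have ha : a ∈ s(a, b) := Sym2.mem_mk_left _ _
      have hσa : mperm M a = b := by
        rw [mperm_apply hM, matchFun_eq hM he ha]
        exact Sym2.congr_right.mp (Sym2.other_spec ha)
      refine mem_matchOf.mpr ⟨a, ?_, ?_⟩
      · rw [hσa]; exact fun h => hab h.symm
      · rw [hσa]

lemma isMatchingSet_singleton {H : SimpleGraph V} {e : Sym2 V} (he : e ∈ H.edgeSet) :
    IsMatchingSet H ({e} : Finset (Sym2 V)) := by
  constructor
  · intro f hf; rw [Finset.mem_singleton] at hf; subst hf; exact he
  · intro f hf g hg hfg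
    rw [Finset.mem_singleton] at hf hg
    exact absurd (hf.trans hg.symm) hfg

lemma isMatchingSet_empty (H : SimpleGraph V) : IsMatchingSet H (∅ : Finset (Sym2 V)) :=
  ⟨fun e he => absurd he (Finset.notMem_empty e), fun e he => absurd he (Finset.notMem_empty e)⟩

lemma mperm_empty : mperm (∅ : Finset (Sym2 V)) = 1 := by
  ext v
  rw [mperm_apply (H := ⊥) (isMatchingSet_empty ⊥), matchFun_eq_self (by simp)]
  rfl

lemma mperm_singleton_sign {H : SimpleGraph V} {e : Sym2 V} (he : e ∈ H.edgeSet) :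
    Equiv.Perm.sign (mperm ({e} : Finset (Sym2 V))) = -1 := by
  induction e using Sym2.ind with
  | _ a b =>
    have hadj : H.Adj a b := (H.mem_edgeSet).mp he
    have hab : a ≠ b := hadj.ne
    have hMe := isMatchingSet_singleton (H := H) he
    have : mperm ({s(a, b)} : Finset (Sym2 V)) = Equiv.swap a b := by
      ext v
      rw [mperm_apply hMe]
      by_cases hva : v = a
      · subst hva
        have hv : v ∈ s(v, b) := Sym2.mem_mk_left _ _
        rw [matchFun_eq hMe (Finset.mem_singleton_self _) hv]
        rw [Equiv.swap_apply_left]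
        exact Sym2.congr_right.mp (Sym2.other_spec hv)
      · by_cases hvb : v = b
        · subst hvb
          have hv : v ∈ s(a, v) := Sym2.mem_mk_right _ _
          rw [matchFun_eq hMe (Finset.mem_singleton_self _) hv]
          rw [Equiv.swap_apply_right]
          have hspec := Sym2.other_spec hv
          rw [Sym2.eq_iff] at hspec
          rcases hspec with ⟨h1, h2⟩ | ⟨h1, h2⟩
          · exact absurd h1.symm hab
          · exact h2
        · rw [matchFun_eq_self, Equiv.swap_apply_of_ne_of_ne hva hvb]
          rintro ⟨f, hf, hvf⟩
          rw [Finset.mem_singleton] at hf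
          subst hf
          rw [Sym2.mem_iff] at hvf
          exact hvf.elim hva hvb
    rw [this, Equiv.Perm.sign_swap hab]

lemma isMatchingSet_subset {H : SimpleGraph V} {M N : Finset (Sym2 V)} (hNM : N ⊆ M)
    (hM : IsMatchingSet H M) : IsMatchingSet H N :=
  ⟨fun e he => hM.1 e (hNM he), fun e he f hf => hM.2 e (hNM he) f (hNM hf)⟩

lemma mperm_insert {H : SimpleGraph V} {M : Finset (Sym2 V)} {e : Sym2 V} (heM : e ∉ M)
    (hM' : IsMatchingSet H (insert e M)) :
    mperm (insert e M) = mperm ({e} : Finset (Sym2 V)) * mperm M := by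
  have hM : IsMatchingSet H M := isMatchingSet_subset (Finset.subset_insert e M) hM'
  have hMe : IsMatchingSet H ({e} : Finset (Sym2 V)) :=
    isMatchingSet_subset (by simp) hM'
  ext v
  rw [mperm_apply hM']
  have hrhs : (mperm ({e} : Finset (Sym2 V)) * mperm M) v
      = mperm ({e} : Finset (Sym2 V)) (mperm M v) := rfl
  rw [hrhs]
  by_cases hve : v ∈ e
  · have hvM : ¬∃ f ∈ M, v ∈ f := by
      rintro ⟨f, hf, hvf⟩
      exact hM'.2 e (Finset.mem_insert_self e M) f (Finset.mem_insert_of_mem hf)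
        (fun h => heM (h ▸ hf)) v hve hvf
    rw [mperm_apply hM, matchFun_eq_self hvM, mperm_apply hMe,
      matchFun_eq hMe (Finset.mem_singleton_self e) hve,
      matchFun_eq hM' (Finset.mem_insert_self e M) hve]
  · by_cases hex : ∃ f ∈ M, v ∈ f
    · obtain ⟨f, hf, hvf⟩ := hex
      rw [matchFun_eq hM' (Finset.mem_insert_of_mem hf) hvf,
        mperm_apply hM, matchFun_eq hM hf hvf, mperm_apply hMe, matchFun_eq_self]
      rintro ⟨g, hg, hog⟩
      rw [Finset.mem_singleton] at hg
      subst hg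
      exact hM'.2 f (Finset.mem_insert_of_mem hf) g (Finset.mem_insert_self _ _)
        (fun h => heM (h ▸ hf)) _ (Sym2.other_mem hvf) hog
    · have hvM' : ¬∃ f ∈ insert e M, v ∈ f := by
        rintro ⟨f, hf, hvf⟩
        rcases Finset.mem_insert.mp hf with rfl | hf
        · exact hve hvf
        · exact hex ⟨f, hf, hvf⟩
      rw [matchFun_eq_self hvM', mperm_apply hM, matchFun_eq_self hex,
        mperm_apply hMe]
      have nn : ¬∃ g ∈ ({e} : Finset (Sym2 V)), v ∈ g := by
        rintro ⟨g, hg, hog⟩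
        rw [Finset.mem_singleton] at hg
        exact hve (hg ▸ hog)
      rw [matchFun_eq_self nn]

lemma sign_mperm {H : SimpleGraph V} : ∀ (M : Finset (Sym2 V)), IsMatchingSet H M →
    Equiv.Perm.sign (mperm M) = (-1) ^ M.card := by
  intro M
  induction M using Finset.induction_on with
  | empty => intro _; rw [mperm_empty]; simp
  | @insert e M heM ih =>
      intro hM'
      rw [mperm_insert heM hM', map_mul, ih (isMatchingSet_subset (Finset.subset_insert e M) hM'),
        mperm_singleton_sign (hM'.1 e (Finset.mem_insert_self e M)),
        Finset.card_insert_of_notMem heM, pow_succ]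
      exact mul_comm _ _

end Comb

section Acyc
variable {V : Type*} [Fintype V] [DecidableEq V]

lemma good_involutive {H : SimpleGraph V} (hac : H.IsAcyclic) (σ : Equiv.Perm V)
    (hgood : ∀ i, σ i ≠ i → H.Adj (σ i) i) : ∀ v, σ (σ v) = v := by
  by_contra hc
  push_neg at hc
  obtain ⟨i, hi⟩ := hc
  have hσi : σ i ≠ i := fun h => hi (by rw [h, h])
  have hper : i ∈ Function.periodicPts σ := by
    refine ⟨orderOf σ, orderOf_pos σ, ?_⟩
    show σ^[orderOf σ] i = i
    rw [Equiv.Perm.iterate_eq_pow, pow_orderOf_eq_one]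
    rfl
  set m := Function.minimalPeriod σ i with hm
  have hm0 : 0 < m := Function.minimalPeriod_pos_of_mem_periodicPts hper
  have hmiter : σ^[m] i = i := Function.iterate_minimalPeriod
  have hm1 : m ≠ 1 := by
    intro h
    rw [h] at hmiter
    exact hσi hmiter
  have hm2 : m ≠ 2 := by
    intro h
    rw [h] at hmiter
    exact hi hmiter
  have hm3 : 3 ≤ m := by omega
  have hinj : Set.InjOn (fun k => σ^[k] i) (Set.Iio m) :=
    Function.iterate_injOn_Iio_minimalPeriod
  have hmoved : ∀ k, σ (σ^[k] i) ≠ σ^[k] i := by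
    intro k h
    have hper1 : Function.IsPeriodicPt σ 1 (σ^[k] i) := by
      simpa [Function.IsPeriodicPt, Function.IsFixedPt] using h
    have := hper1.minimalPeriod_dvd
    rw [Function.minimalPeriod_apply_iterate hper k] at this
    rw [Nat.dvd_one, ← hm] at this
    exact hm1 this
  have hadjk : ∀ k, H.Adj (σ^[k+1] i) (σ^[k] i) := by
    intro k
    rw [Function.iterate_succ_apply']
    exact hgood _ (hmoved k)
  let walk : ∀ k : ℕ, H.Walk (σ^[k] i) i := fun k =>
    Nat.rec (motive := fun k => H.Walk (σ^[k] i) i) SimpleGraph.Walk.nil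
      (fun k ih => SimpleGraph.Walk.cons (hadjk k) ih) k
  have hsupp : ∀ k, (walk k).support = ((List.range (k+1)).map (fun j => σ^[j] i)).reverse := by
    intro k
    induction k with
    | zero => simp [walk, List.range_succ]; rfl
    | succ k ih =>
        have hww : walk (k+1) = SimpleGraph.Walk.cons (hadjk k) (walk k) := rfl
        rw [hww, SimpleGraph.Walk.support_cons, ih]
        conv_rhs => rw [List.range_succ]
        simp [pow_succ, Equiv.Perm.mul_apply]
  have hedges : ∀ k, (walk k).edges
      = ((List.range k).map (fun j => s(σ^[j+1] i, σ^[j] i))).reverse := by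
    intro k
    induction k with
    | zero => simp [walk]; rfl
    | succ k ih =>
        have hww : walk (k+1) = SimpleGraph.Walk.cons (hadjk k) (walk k) := rfl
        rw [hww, SimpleGraph.Walk.edges_cons, ih]
        conv_rhs => rw [List.range_succ]
        simp [pow_succ, Equiv.Perm.mul_apply]
  have hpath : (walk (m-1)).IsPath := by
    rw [SimpleGraph.Walk.isPath_def, hsupp, List.nodup_reverse]
    refine List.Nodup.map_on ?_ List.nodup_range
    intro x hx y hy hxy
    rw [List.mem_range] at hx hy
    have hx' : x ∈ Set.Iio m := by simp only [Set.mem_Iio]; omega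
    have hy' : y ∈ Set.Iio m := by simp only [Set.mem_Iio]; omega
    exact hinj hx' hy' hxy
  have hlast : σ (σ^[m-1] i) = i := by
    have h1 : (⇑σ)^[m-1+1] i = σ ((⇑σ)^[m-1] i) := Function.iterate_succ_apply' σ (m-1) i
    have hmm : m - 1 + 1 = m := by omega
    rw [← h1, hmm, hmiter]
  have hadjtop : H.Adj i (σ^[m-1] i) := by
    have := hgood (σ^[m-1] i) (hmoved (m-1))
    rwa [hlast] at this
  have hene : s(i, σ^[m-1] i) ∉ (walk (m-1)).edges := by
    rw [hedges, List.mem_reverse]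
    intro hmem
    rw [List.mem_map] at hmem
    obtain ⟨j, hj, hje⟩ := hmem
    rw [List.mem_range] at hj
    rw [Sym2.eq_iff] at hje
    rcases hje with ⟨h1, h2⟩ | ⟨h1, h2⟩
    · have h0 : (fun k => σ^[k] i) (j+1) = (fun k => σ^[k] i) 0 := h1
      have : j + 1 = 0 := hinj (by simp only [Set.mem_Iio]; omega) (by simp only [Set.mem_Iio]; omega) h0
      omega
    · have h0 : (fun k => σ^[k] i) j = (fun k => σ^[k] i) 0 := h2
      have hj0 : j = 0 := hinj (by simp only [Set.mem_Iio]; omega) (by simp only [Set.mem_Iio]; omega) h0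
      subst hj0
      have h0' : (fun k => σ^[k] i) 1 = (fun k => σ^[k] i) (m-1) := h1
      have h1m : 1 = m - 1 := hinj (by simp only [Set.mem_Iio]; omega) (by simp only [Set.mem_Iio]; omega) h0'
      omega
  exact hac (SimpleGraph.Walk.cons hadjtop (walk (m-1)))
    (SimpleGraph.Path.cons_isCycle ⟨walk (m-1), hpath⟩ hadjtop hene)

end Acyc

section Det
variable {V : Type*} [Fintype V] [DecidableEq V]

lemma fiber_card {σ : Equiv.Perm V} (hinv : ∀ v, σ (σ v) = v) {e : Sym2 V}
    (he : e ∈ matchOf σ) :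
    ((Finset.univ.filter fun i => σ i ≠ i).filter fun i => s(i, σ i) = e).card = 2 := by
  obtain ⟨j, hj, rfl⟩ := mem_matchOf.mp he
  have hset : ((Finset.univ.filter fun i => σ i ≠ i).filter fun i => s(i, σ i) = s(j, σ j))
      = {j, σ j} := by
    ext i
    simp only [Finset.mem_filter, Finset.mem_univ, true_and, Finset.mem_insert,
      Finset.mem_singleton]
    constructor
    · rintro ⟨hi, hie⟩
      rw [Sym2.eq_iff] at hie
      rcases hie with ⟨h1, h2⟩ | ⟨h1, h2⟩
      · exact Or.inl h1
      · exact Or.inr h1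
    · rintro (rfl | rfl)
      · exact ⟨hj, rfl⟩
      · constructor
        · rw [hinv j]; exact hj.symm
        · rw [hinv j, Sym2.eq_swap]
  rw [hset, Finset.card_insert_of_notMem, Finset.card_singleton]
  exact fun h => hj (Finset.mem_singleton.mp h).symm

lemma det_term_eq (H : SimpleGraph V) (w : Sym2 V → ℝ) (hw : ∀ e ∈ H.edgeSet, 0 ≤ w e) (t : ℝ)
    {σ : Equiv.Perm V} (hgood : ∀ i, σ i ≠ i → H.Adj (σ i) i) (hinv : ∀ v, σ (σ v) = v) :
    Equiv.Perm.sign σ • ∏ i, (t • (1 : Matrix V V ℝ) - adjM H w) (σ i) i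
      = (∏ e ∈ matchOf σ, w e) * (-1 : ℝ) ^ (matchOf σ).card
        * t ^ (Fintype.card V - 2 * (matchOf σ).card) := by
  have hM := matchOf_isMatching hgood hinv
  set M := matchOf σ with hMdef
  set c := M.card with hc
  set moved := Finset.univ.filter (fun i => σ i ≠ i) with hmoveddef
  have hmaps : ∀ i ∈ moved, s(i, σ i) ∈ M := by
    intro i hi
    rw [hmoveddef, Finset.mem_filter] at hi
    exact mem_matchOf.mpr ⟨i, hi.2, rfl⟩
  have h2c : moved.card = 2 * c := by
    rw [Finset.card_eq_sum_card_fiberwise hmaps,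
      Finset.sum_congr rfl (fun e he => fiber_card hinv he), Finset.sum_const, smul_eq_mul,
      mul_comm]
  have hentry_fix : ∀ i, σ i = i → (t • (1 : Matrix V V ℝ) - adjM H w) (σ i) i = t := by
    intro i h
    rw [h]
    simp [adjM, Matrix.one_apply, SimpleGraph.irrefl]
  have hentry_mov : ∀ i, σ i ≠ i →
      (t • (1 : Matrix V V ℝ) - adjM H w) (σ i) i = -Real.sqrt (w s(i, σ i)) := by
    intro i h
    have hadj := hgood i h
    rw [Matrix.sub_apply, Matrix.smul_apply, Matrix.one_apply_ne h, smul_eq_mul, mul_zero,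
      zero_sub]
    congr 1
    show (if H.Adj (σ i) i then Real.sqrt (w s(σ i, i)) else 0) = _
    rw [if_pos hadj, Sym2.eq_swap]
  have hsplit : (Finset.univ.filter fun i => σ i = i).prod
        (fun i => (t • (1 : Matrix V V ℝ) - adjM H w) (σ i) i)
      * (Finset.univ.filter fun i => ¬σ i = i).prod
        (fun i => (t • (1 : Matrix V V ℝ) - adjM H w) (σ i) i)
      = ∏ i, (t • (1 : Matrix V V ℝ) - adjM H w) (σ i) i :=
    Finset.prod_filter_mul_prod_filter_not Finset.univ _ _
  have hmovedeq : (Finset.univ.filter fun i => ¬σ i = i) = moved := rfl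
  have hfixedcard : (Finset.univ.filter fun i => σ i = i).card = Fintype.card V - 2 * c := by
    have h3 := Finset.card_filter_add_card_filter_not
      (s := (Finset.univ : Finset V)) (p := fun i => σ i = i)
    rw [hmovedeq, h2c] at h3
    rw [← Finset.card_univ]
    omega
  have hprod_fix : (Finset.univ.filter fun i => σ i = i).prod
      (fun i => (t • (1 : Matrix V V ℝ) - adjM H w) (σ i) i) = t ^ (Fintype.card V - 2 * c) := by
    rw [Finset.prod_congr rfl (fun i hi => hentry_fix i (Finset.mem_filter.mp hi).2),
      Finset.prod_const, hfixedcard]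
  have hprod_sqrt : moved.prod (fun i => Real.sqrt (w s(i, σ i))) = ∏ e ∈ M, w e := by
    rw [← Finset.prod_fiberwise_of_maps_to hmaps (fun i => Real.sqrt (w s(i, σ i)))]
    refine Finset.prod_congr rfl fun e he => ?_
    have hinner : (moved.filter fun i => s(i, σ i) = e).prod
        (fun i => Real.sqrt (w s(i, σ i))) = Real.sqrt (w e) ^ 2 := by
      rw [Finset.prod_congr rfl (fun i hi => by rw [(Finset.mem_filter.mp hi).2]),
        Finset.prod_const, fiber_card hinv he]
    rw [hinner, Real.sq_sqrt (hw e (hM.1 e he))]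
  have hprod_mov : moved.prod (fun i => (t • (1 : Matrix V V ℝ) - adjM H w) (σ i) i)
      = (-1 : ℝ) ^ (2 * c) * ∏ e ∈ M, w e := by
    have h1 : moved.prod (fun i => (t • (1 : Matrix V V ℝ) - adjM H w) (σ i) i)
        = moved.prod (fun i => (-1 : ℝ) * Real.sqrt (w s(i, σ i))) := by
      refine Finset.prod_congr rfl fun i hi => ?_
      rw [hentry_mov i (Finset.mem_filter.mp hi).2]
      ring
    rw [h1, Finset.prod_mul_distrib, Finset.prod_const, h2c, hprod_sqrt]
  have hsign : (Equiv.Perm.sign σ : ℤ) = (-1) ^ c := by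
    have : σ = mperm M := (mperm_matchOf hgood hinv).symm
    rw [this, sign_mperm M hM]
    push_cast
    ring
  rw [← hsplit, hmovedeq, hprod_fix, hprod_mov, Units.smul_def, zsmul_eq_mul, hsign]
  push_cast
  rw [pow_mul]
  norm_num
  ring

lemma wmp_eq_det (H : SimpleGraph V) (hac : H.IsAcyclic) (w : Sym2 V → ℝ)
    (hw : ∀ e ∈ H.edgeSet, 0 ≤ w e) (t : ℝ) :
    wmp H w t = (t • (1 : Matrix V V ℝ) - adjM H w).det := by
  rw [Matrix.det_apply]
  set S := Finset.univ.filter (fun σ : Equiv.Perm V => ∀ i, σ i ≠ i → H.Adj (σ i) i) with hS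
  have hzero : ∀ σ ∈ (Finset.univ : Finset (Equiv.Perm V)), σ ∉ S →
      (Equiv.Perm.sign σ • ∏ i, (t • (1 : Matrix V V ℝ) - adjM H w) (σ i) i) = 0 := by
    intro σ _ hσ
    have hbad : ∃ i, σ i ≠ i ∧ ¬H.Adj (σ i) i := by
      by_contra h
      push_neg at h
      exact hσ (Finset.mem_filter.mpr ⟨Finset.mem_univ _, h⟩)
    obtain ⟨i, hi, hnadj⟩ := hbad
    have hent : (t • (1 : Matrix V V ℝ) - adjM H w) (σ i) i = 0 := by
      rw [Matrix.sub_apply, Matrix.smul_apply, Matrix.one_apply_ne hi, smul_eq_mul, mul_zero,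
        zero_sub]
      show -(if H.Adj (σ i) i then Real.sqrt (w s(σ i, i)) else 0) = 0
      rw [if_neg hnadj, neg_zero]
    have hp : ∏ j, (t • (1 : Matrix V V ℝ) - adjM H w) (σ j) j = 0 :=
      Finset.prod_eq_zero (Finset.mem_univ i) hent
    rw [hp, smul_zero]
  rw [← Finset.sum_subset (Finset.subset_univ S) hzero, wmp]
  refine Finset.sum_nbij' (i := fun M => mperm M) (j := fun σ => matchOf σ) ?_ ?_ ?_ ?_ ?_
  · intro M hMm
    have hM : IsMatchingSet H M := (Finset.mem_filter.mp hMm).2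
    exact Finset.mem_filter.mpr ⟨Finset.mem_univ _, mperm_good hM⟩
  · intro σ hσ
    have hgood := (Finset.mem_filter.mp hσ).2
    have hinv := good_involutive hac σ hgood
    exact Finset.mem_filter.mpr ⟨Finset.mem_univ _, matchOf_isMatching hgood hinv⟩
  · intro M hMm
    exact matchOf_mperm (Finset.mem_filter.mp hMm).2
  · intro σ hσ
    have hgood := (Finset.mem_filter.mp hσ).2
    exact mperm_matchOf hgood (good_involutive hac σ hgood)
  · intro M hMm
    have hM : IsMatchingSet H M := (Finset.mem_filter.mp hMm).2
    rw [det_term_eq H w hw t (mperm_good hM) (mperm_involutive hM), matchOf_mperm hM]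

end Det

lemma vecMul_eq_star_mulVec {n : Type*} [Fintype n] U (x : n → ℝ) :
    Matrix.vecMul x U = (star U).mulVec x := by
  ext j
  simp [Matrix.vecMul, Matrix.mulVec, dotProduct, Matrix.star_apply, mul_comm]

lemma exists_top_eigen {n : Type*} [Fintype n] [DecidableEq n] [Nonempty n]
    (B : Matrix n n ℝ) (hB : B.IsHermitian) :
    ∃ lam : ℝ, (lam • (1 : Matrix n n ℝ) - B).det = 0 ∧
      ∀ x : n → ℝ, dotProduct x (B.mulVec x) ≤ lam * dotProduct x x := by
  obtain ⟨i0, -, hmax⟩ := Finset.exists_max_image Finset.univ hB.eigenvalues ⟨Classical.arbitrary n, Finset.mem_univ _⟩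
  refine ⟨hB.eigenvalues i0, ?_, ?_⟩
  · rw [← Matrix.exists_mulVec_eq_zero_iff]
    refine ⟨⇑(hB.eigenvectorBasis i0), ?_, ?_⟩
    · intro h0
      have := hB.eigenvectorBasis.orthonormal.1 i0
      rw [show (hB.eigenvectorBasis i0) = 0 by ext j; exact congrFun h0 j] at this
      simp at this
    · rw [Matrix.sub_mulVec, hB.mulVec_eigenvectorBasis, Matrix.smul_mulVec,
        Matrix.one_mulVec]
      simp
  · intro x
    set U : Matrix n n ℝ := (hB.eigenvectorUnitary : Matrix n n ℝ) with hU
    have hUu : U ∈ Matrix.unitaryGroup n ℝ := hB.eigenvectorUnitary.2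
    set z : n → ℝ := (star U).mulVec x with hz
    have hBx : B.mulVec x = U.mulVec
        ((Matrix.diagonal hB.eigenvalues).mulVec z) := by
      have hD : (Matrix.diagonal (RCLike.ofReal ∘ hB.eigenvalues) : Matrix n n ℝ)
          = Matrix.diagonal hB.eigenvalues := by
        ext i j; by_cases h : i = j <;> simp [Matrix.diagonal, h]
      conv_lhs => rw [hB.spectral_theorem]
      rw [Unitary.conjStarAlgAut_apply, hD, ← Matrix.mulVec_mulVec, ← Matrix.mulVec_mulVec]
    have hdot : dotProduct x (B.mulVec x)
        = dotProduct z ((Matrix.diagonal hB.eigenvalues).mulVec z) := by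
      rw [hBx, Matrix.dotProduct_mulVec, vecMul_eq_star_mulVec]
    have hzz : dotProduct z z = dotProduct x x := by
      have h1 : dotProduct z z = dotProduct ((U * star U).mulVec x) x := by
        conv_lhs => rw [hz, Matrix.dotProduct_mulVec, vecMul_eq_star_mulVec]
        rw [star_star, ← Matrix.mulVec_mulVec]
      rw [h1, Matrix.mem_unitaryGroup_iff.mp hUu, Matrix.one_mulVec]
    rw [hdot, ← hzz]
    have : dotProduct z ((Matrix.diagonal hB.eigenvalues).mulVec z)
        = ∑ i, hB.eigenvalues i * (z i * z i) := by
      simp [dotProduct, Matrix.mulVec_diagonal]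
      exact Finset.sum_congr rfl fun i _ => by ring
    rw [this, dotProduct, Finset.mul_sum]
    refine Finset.sum_le_sum fun i _ => ?_
    exact mul_le_mul_of_nonneg_right (hmax i (Finset.mem_univ i)) (mul_self_nonneg _)

/-- If `G` is a tree with positive edge weights and `G₁` is a subgraph of `G`, then the largest
real root of the weighted matching polynomial of `G₁` is at most that of `G`. -/
theorem stmt_1 {V : Type*} [Fintype V] [DecidableEq V] (G G₁ : SimpleGraph V)
    (hT : G.IsTree) (hsub : G₁ ≤ G)
    (w : Sym2 V → ℝ) (hw : ∀ e ∈ G.edgeSet, 0 < w e)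
    (t₁ t : ℝ)
    (ht₁ : IsGreatest {s : ℝ | wmp G₁ w s = 0} t₁)
    (ht : IsGreatest {s : ℝ | wmp G w s = 0} t) :
    t₁ ≤ t := by
  haveI : Nonempty V := hT.1.nonempty
  have hacG : G.IsAcyclic := hT.2
  have hacG₁ : G₁.IsAcyclic := fun v c hc => hacG (c.mapLe hsub) (hc.mapLe hsub)
  have hwG : ∀ e ∈ G.edgeSet, 0 ≤ w e := fun e he => (hw e he).le
  have hwG₁ : ∀ e ∈ G₁.edgeSet, 0 ≤ w e :=
    fun e he => (hw e (SimpleGraph.edgeSet_mono hsub he)).le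
  set A := adjM G w with hA
  set A₁ := adjM G₁ w with hA₁
  have hherm : ∀ H : SimpleGraph V, (adjM H w).IsHermitian := by
    intro H
    show (adjM H w).conjTranspose = adjM H w
    ext i j
    rw [Matrix.conjTranspose_apply]
    show star (if H.Adj j i then Real.sqrt (w s(j, i)) else 0)
        = (if H.Adj i j then Real.sqrt (w s(i, j)) else 0)
    rw [star_trivial]
    by_cases h : H.Adj i j
    · rw [if_pos h.symm, if_pos h, Sym2.eq_swap]
    · rw [if_neg (fun hh => h hh.symm), if_neg h]
  obtain ⟨lam, hdet, hray⟩ := exists_top_eigen A (hherm G)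
  have hlam_le : lam ≤ t := by
    refine ht.2 ?_
    show wmp G w lam = 0
    rw [wmp_eq_det G hacG w hwG lam]
    exact hdet
  have hdet1 : (t₁ • (1 : Matrix V V ℝ) - A₁).det = 0 := by
    rw [← wmp_eq_det G₁ hacG₁ w hwG₁ t₁]
    exact ht₁.1
  obtain ⟨x, hx0, hxe⟩ := Matrix.exists_mulVec_eq_zero_iff.mpr hdet1
  have hA1x : A₁.mulVec x = t₁ • x := by
    have h1 : (t₁ • (1 : Matrix V V ℝ)).mulVec x - A₁.mulVec x = 0 := by
      rw [← Matrix.sub_mulVec]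
      exact hxe
    have h2 : (t₁ • (1 : Matrix V V ℝ)).mulVec x = t₁ • x := by
      rw [Matrix.smul_mulVec, Matrix.one_mulVec]
    rw [h2] at h1
    exact (sub_eq_zero.mp h1).symm
  set y : V → ℝ := fun i => |x i| with hy
  have hdd : ∀ (B : Matrix V V ℝ) (u : V → ℝ),
      dotProduct u (B.mulVec u) = ∑ i, ∑ j, u i * (B i j * u j) := by
    intro B u
    rw [dotProduct]
    refine Finset.sum_congr rfl fun i _ => ?_
    rw [Matrix.mulVec, dotProduct, Finset.mul_sum]
  have hA1nonneg : ∀ i j, (0 : ℝ) ≤ A₁ i j := by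
    intro i j
    show (0 : ℝ) ≤ (if G₁.Adj i j then Real.sqrt (w s(i, j)) else 0)
    split
    · exact Real.sqrt_nonneg _
    · exact le_rfl
  have hmono : ∀ i j, A₁ i j ≤ A i j := by
    intro i j
    show (if G₁.Adj i j then Real.sqrt (w s(i, j)) else 0)
        ≤ (if G.Adj i j then Real.sqrt (w s(i, j)) else 0)
    by_cases h : G₁.Adj i j
    · rw [if_pos h, if_pos (hsub h)]
    · rw [if_neg h]
      split
      · exact Real.sqrt_nonneg _
      · exact le_rfl
  have step2 : dotProduct x (A₁.mulVec x) ≤ dotProduct y (A.mulVec y) := by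
    rw [hdd, hdd]
    refine Finset.sum_le_sum fun i _ => Finset.sum_le_sum fun j _ => ?_
    calc x i * (A₁ i j * x j) = A₁ i j * (x i * x j) := by ring
      _ ≤ A₁ i j * |x i * x j| :=
          mul_le_mul_of_nonneg_left (le_abs_self _) (hA1nonneg i j)
      _ = A₁ i j * (y i * y j) := by rw [abs_mul]
      _ ≤ A i j * (y i * y j) :=
          mul_le_mul_of_nonneg_right (hmono i j) (mul_nonneg (abs_nonneg _) (abs_nonneg _))
      _ = y i * (A i j * y j) := by ring
  have hyy : dotProduct y y = dotProduct x x := by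
    rw [dotProduct, dotProduct]
    exact Finset.sum_congr rfl fun i _ => abs_mul_abs_self (x i)
  have hxx_pos : 0 < dotProduct x x := by
    rw [dotProduct]
    obtain ⟨i, hxi⟩ := Function.ne_iff.mp hx0
    refine Finset.sum_pos' (fun j _ => mul_self_nonneg (x j)) ⟨i, Finset.mem_univ i, ?_⟩
    exact mul_self_pos.mpr hxi
  have step1 : t₁ * dotProduct x x = dotProduct x (A₁.mulVec x) := by
    rw [hA1x, dotProduct_smul, smul_eq_mul]
  have chain : t₁ * dotProduct x x ≤ lam * dotProduct x x := by
    rw [step1]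
    calc dotProduct x (A₁.mulVec x) ≤ dotProduct y (A.mulVec y) := step2
      _ ≤ lam * dotProduct y y := hray y
      _ = lam * dotProduct x x := by rw [hyy]
  have ht₁lam : t₁ ≤ lam := (mul_le_mul_iff_of_pos_right hxx_pos).mp chain
  linarith
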